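/- arXiv:2412.16090 — 4 statements merged into one kernel-verified Lean document; each statement's English description precedes it below -/
import Mathlib

section
/- Let n ≥ 2. For any finite subset F of ℤⁿ not containing 0, there exists a subgroup N ≤ ℤⁿ such that N ∩ F = ∅ and ℤⁿ/N is isomorphic to ℤ. -/
/-- Uniqueness of balanced base-`a` representation: if all digits are small, the value
determines them. -/
lemma aux_base_rep (a : ℤ) : ∀ (n : ℕ) (x : Fin n → ℤ), (∀ i, 2 * |x i| < a) →
    (∑ i, x i * a ^ (i : ℕ)) = 0 → ∀ i, x i = 0 := by
  intro n
  induction n with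
  | zero => intro x _ _ i; exact i.elim0
  | succ n ih =>
    intro x hb hs
    have ha : 0 < a := lt_of_le_of_lt (by positivity) (hb 0)
    rw [Fin.sum_univ_succ] at hs
    simp only [Fin.val_zero, pow_zero, mul_one] at hs
    have hsum : ∑ i : Fin n, x i.succ * a ^ ((i.succ : Fin (n+1)) : ℕ)
        = a * ∑ i : Fin n, x i.succ * a ^ (i : ℕ) := by
      rw [Finset.mul_sum]
      refine Finset.sum_congr rfl fun i _ => ?_
      rw [Fin.val_succ, pow_succ]; ring
    rw [hsum] at hs
    have hx0 : x 0 = 0 := by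
      have hdvd : a ∣ x 0 := ⟨-(∑ i : Fin n, x i.succ * a ^ (i : ℕ)), by linarith⟩
      have habs : |x 0| < a := by have := hb 0; have := abs_nonneg (x 0); linarith
      exact Int.eq_zero_of_abs_lt_dvd hdvd habs
    have hS : ∑ i : Fin n, x i.succ * a ^ (i : ℕ) = 0 := by
      rcases mul_eq_zero.mp (by linarith : a * ∑ i : Fin n, x i.succ * a ^ (i : ℕ) = 0) with h | h
      · exact absurd h ha.ne'
      · exact h
    have htail := ih (fun i => x i.succ) (fun i => hb i.succ) hS
    intro i
    refine Fin.cases ?_ ?_ i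
    · exact hx0
    · exact htail

/-- The evaluation homomorphism. -/
def auxHom (n : ℕ) (a : ℤ) : (Fin n → ℤ) →+ ℤ := AddMonoidHom.mk'
    (fun x => ∑ i, x i * a ^ (i : ℕ))
    (by intro x y
        rw [← Finset.sum_add_distrib]
        exact Finset.sum_congr rfl fun i _ => by simp [add_mul])

/-- Let `n ≥ 2`. For any finite subset `F` of `ℤⁿ` not containing `0`, there
exists a subgroup `N ≤ ℤⁿ` such that `N ∩ F = ∅` and `ℤⁿ/N` is isomorphic to `ℤ`. -/
theorem exists_subgroup_disjoint_quotient_int (n : ℕ) (hn : 2 ≤ n)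
    (F : Finset (Fin n → ℤ)) (hF : (0 : Fin n → ℤ) ∉ F) :
    ∃ N : AddSubgroup (Fin n → ℤ), (∀ x ∈ F, x ∉ N) ∧
      Nonempty (((Fin n → ℤ) ⧸ N) ≃+ ℤ) := by
  obtain ⟨a, ha0, ha⟩ : ∃ a : ℤ, 0 < a ∧ ∀ x ∈ F, ∀ i, 2 * |x i| < a := by
    obtain ⟨M, hMdef⟩ : ∃ M : ℕ, M = F.sup fun x => Finset.univ.sup fun i => (x i).natAbs :=
      ⟨_, rfl⟩
    refine ⟨2 * (M : ℤ) + 1, by positivity, fun x hx i => ?_⟩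
    have h1 : (x i).natAbs ≤ Finset.univ.sup fun i => (x i).natAbs :=
      Finset.le_sup (f := fun i => (x i).natAbs) (Finset.mem_univ i)
    have h2 : (Finset.univ.sup fun i => (x i).natAbs)
        ≤ F.sup fun x => Finset.univ.sup fun i => (x i).natAbs :=
      Finset.le_sup (f := fun x => Finset.univ.sup fun i => (x i).natAbs) hx
    have h3 : |x i| = ((x i).natAbs : ℤ) := Int.abs_eq_natAbs _
    have h4 : (x i).natAbs ≤ M := hMdef ▸ le_trans h1 h2
    clear h1 h2 hMdef
    rw [h3]
    push_cast
    omega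
  have hne : NeZero n := ⟨by omega⟩
  set f : (Fin n → ℤ) →+ ℤ := auxHom n a with hf
  have hsingle : f (Pi.single (0 : Fin n) 1) = 1 := by
    show (∑ i : Fin n, (Pi.single (0 : Fin n) (1:ℤ) : Fin n → ℤ) i * a ^ (i : ℕ)) = 1
    rw [Finset.sum_eq_single (0 : Fin n)]
    · simp
    · intro b _ hb; rw [Pi.single_eq_of_ne hb]; ring
    · intro h; exact absurd (Finset.mem_univ _) h
  have hsurj : Function.Surjective f := by
    intro z
    refine ⟨z • Pi.single (0 : Fin n) 1, ?_⟩
    rw [map_zsmul, hsingle, smul_eq_mul, mul_one]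
  refine ⟨f.ker, ?_, ⟨QuotientAddGroup.quotientKerEquivOfSurjective f hsurj⟩⟩
  intro x hx hker
  have hfx : (∑ i, x i * a ^ (i : ℕ)) = 0 := AddMonoidHom.mem_ker.mp hker
  have hx0 : x = 0 := funext (aux_base_rep a n x (ha x hx) hfx)
  rw [hx0] at hx
  exact hF hx
end

section
/- Let A ≤ B be finitely generated free abelian groups. Then there exists a finite-index subgroup C ≤ B with A ≤ C such that for every subgroup D ≤ A with A/D torsion-free, the quotient C/D is also torsion-free. -/
/-- The old Mathlib notion (removed since): a torsion-free additive monoid. -/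
def AddMonoid.IsTorsionFree (G : Type*) [AddMonoid G] : Prop :=
  ∀ g : G, g ≠ 0 → ¬IsOfFinAddOrder g

lemma tf_quot_iff {B : Type*} [AddCommGroup B] (X D : AddSubgroup B) :
    AddMonoid.IsTorsionFree (X ⧸ D.addSubgroupOf X) ↔
      ∀ x ∈ X, ∀ n : ℕ, n ≠ 0 → n • x ∈ D → x ∈ D := by
  constructor
  · intro hTF x hx n hn hnx
    by_contra hxD
    set g : X ⧸ D.addSubgroupOf X := QuotientAddGroup.mk ⟨x, hx⟩ with hg
    have hgne : g ≠ 0 := by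
      simp only [hg, ne_eq, QuotientAddGroup.eq_zero_iff, AddSubgroup.mem_addSubgroupOf]
      exact hxD
    refine hTF g hgne ?_
    refine isOfFinAddOrder_iff_nsmul_eq_zero.mpr ⟨n, Nat.pos_of_ne_zero hn, ?_⟩
    have : (n • g) = QuotientAddGroup.mk (n • (⟨x, hx⟩ : X)) := rfl
    rw [this, QuotientAddGroup.eq_zero_iff, AddSubgroup.mem_addSubgroupOf]
    exact hnx
  · intro h g hgne hford
    obtain ⟨n, hn, hng⟩ := isOfFinAddOrder_iff_nsmul_eq_zero.mp hford
    obtain ⟨⟨x, hx⟩, rfl⟩ := QuotientAddGroup.mk_surjective g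
    have hnx : n • x ∈ D := by
      have : (n • (QuotientAddGroup.mk ⟨x, hx⟩ : X ⧸ D.addSubgroupOf X)) =
          QuotientAddGroup.mk (n • (⟨x, hx⟩ : X)) := rfl
      rw [this, QuotientAddGroup.eq_zero_iff, AddSubgroup.mem_addSubgroupOf] at hng
      exact hng
    exact hgne (by
      rw [QuotientAddGroup.eq_zero_iff, AddSubgroup.mem_addSubgroupOf]
      exact h x hx n hn.ne' hnx)

/-- Let `A ≤ B` be finitely generated free abelian groups. Then there exists a
finite-index subgroup `C ≤ B` with `A ≤ C` such that for every subgroup `D ≤ A` with `A/D`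
torsion-free, the quotient `C/D` is also torsion-free. -/
theorem exists_finiteIndex_torsionFree_extension
    {B : Type*} [AddCommGroup B] [Module.Free ℤ B] [Module.Finite ℤ B]
    (A : AddSubgroup B) :
    ∃ C : AddSubgroup B, A ≤ C ∧ C.FiniteIndex ∧
      ∀ D : AddSubgroup B, D ≤ A →
        AddMonoid.IsTorsionFree (A ⧸ D.addSubgroupOf A) →
        AddMonoid.IsTorsionFree (C ⧸ D.addSubgroupOf C) := by
  classical
  set Asub : Submodule ℤ B := AddSubgroup.toIntSubmodule A with hAsub
  set S : Submodule ℤ B := (Submodule.torsion ℤ (B ⧸ Asub)).comap Asub.mkQ with hS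
  -- membership in S
  have hmemS : ∀ x : B, x ∈ S ↔ ∃ n : ℤ, n ≠ 0 ∧ n • x ∈ A := by
    intro x
    constructor
    · rintro hx
      obtain ⟨⟨n, hn⟩, h⟩ := hx
      refine ⟨n, nonZeroDivisors.coe_ne_zero ⟨n, hn⟩, ?_⟩
      have : Asub.mkQ (n • x) = 0 := by
        rw [map_smul]; exact h
      rw [Submodule.mkQ_apply, Submodule.Quotient.mk_eq_zero] at this
      exact this
    · rintro ⟨n, hn, h⟩
      refine ⟨⟨n, mem_nonZeroDivisors_of_ne_zero hn⟩, ?_⟩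
      show n • Asub.mkQ x = 0
      rw [← map_smul, Submodule.mkQ_apply, Submodule.Quotient.mk_eq_zero]
      exact h
  have hAS : ∀ x ∈ A, x ∈ S := fun x hx => (hmemS x).mpr ⟨1, one_ne_zero, by simpa⟩
  -- B ⧸ S is torsion-free
  haveI : NoZeroSMulDivisors ℤ (B ⧸ S) := by
    refine ⟨fun {c x} h => ?_⟩
    by_cases hc : c = 0
    · exact Or.inl hc
    · refine Or.inr ?_
      obtain ⟨x, rfl⟩ := S.mkQ_surjective x
      rw [← map_smul, Submodule.mkQ_apply, Submodule.Quotient.mk_eq_zero] at h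
      obtain ⟨n, hn, hnx⟩ := (hmemS _).mp h
      rw [Submodule.mkQ_apply, Submodule.Quotient.mk_eq_zero]
      exact (hmemS x).mpr ⟨n * c, mul_ne_zero hn hc, by rwa [mul_smul]⟩
  haveI : Module.Free ℤ (B ⧸ S) := Module.free_of_finite_type_torsion_free'
  -- splitting
  obtain ⟨f, hf⟩ := Module.projective_lifting_property S.mkQ (LinearMap.id)
    S.mkQ_surjective
  have hfs : ∀ y, S.mkQ (f y) = y := fun y => congrFun (congrArg DFunLike.coe hf) y
  set E : Submodule ℤ B := LinearMap.range f with hE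
  have hSE : ∀ x ∈ S, x ∈ E → x = 0 := by
    rintro x hxS ⟨y, rfl⟩
    have h1 : S.mkQ (f y) = 0 := by
      rw [Submodule.mkQ_apply, Submodule.Quotient.mk_eq_zero]; exact hxS
    rw [hfs] at h1
    rw [h1, map_zero]
  have hdecomp : ∀ b : B, ∃ s ∈ S, ∃ e ∈ E, b = s + e := by
    intro b
    refine ⟨b - f (S.mkQ b), ?_, f (S.mkQ b), ⟨_, rfl⟩, by abel⟩
    rw [← Submodule.Quotient.mk_eq_zero, ← Submodule.mkQ_apply, map_sub, hfs, sub_self]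
  set C : AddSubgroup B := A ⊔ E.toAddSubgroup with hC
  have hAC : A ≤ C := le_sup_left
  have hEC : ∀ e ∈ E, e ∈ C := fun e he => le_sup_right (α := AddSubgroup B) (show e ∈ E.toAddSubgroup from he)
  -- decomposition of elements of C
  have hCmem : ∀ c ∈ C, ∃ a ∈ A, ∃ e ∈ E, c = a + e := by
    intro c hc
    rw [hC, AddSubgroup.mem_sup] at hc
    obtain ⟨a, ha, e, he, rfl⟩ := hc
    exact ⟨a, ha, e, he, rfl⟩
  -- finiteness of B ⧸ C
  haveI : Finite (B ⧸ C) := by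
    -- surjection from S' ⧸ A'
    set S' : AddSubgroup B := S.toAddSubgroup with hS'
    set A' : AddSubgroup S' := A.addSubgroupOf S' with hA'
    -- S' ⧸ A' is finite: fg and torsion
    haveI : Module.Finite ℤ S := Module.Finite.iff_fg.mpr (IsNoetherian.noetherian S)
    haveI : AddGroup.FG S' := by
      have := Module.Finite.iff_addGroup_fg.mp (inferInstance : Module.Finite ℤ S)
      exact this
    haveI : Finite (S' ⧸ A') := by
      refine AddCommGroup.finite_of_fg_torsion _ ?_
      intro g
      obtain ⟨⟨x, hx⟩, rfl⟩ := QuotientAddGroup.mk_surjective g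
      obtain ⟨n, hn, hnx⟩ := (hmemS x).mp hx
      refine isOfFinAddOrder_iff_nsmul_eq_zero.mpr ⟨n.natAbs, Int.natAbs_pos.mpr hn, ?_⟩
      have : (n.natAbs • (QuotientAddGroup.mk ⟨x, hx⟩ : S' ⧸ A')) =
          QuotientAddGroup.mk (n.natAbs • (⟨x, hx⟩ : S')) := rfl
      rw [this, QuotientAddGroup.eq_zero_iff]
      show n.natAbs • x ∈ A
      rcases Int.natAbs_eq n with h | h
      · rw [← natCast_zsmul, ← h]; exact hnx
      · rw [← natCast_zsmul, ← neg_neg ((n.natAbs : ℤ) • x), ← neg_smul, ← h]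
        exact A.neg_mem hnx
    -- build surjection
    have hker : A' ≤ (((QuotientAddGroup.mk' C).comp S'.subtype).ker) := by
      intro ⟨x, hx⟩ hxA
      simp only [AddMonoidHom.mem_ker, AddMonoidHom.comp_apply, AddSubgroup.coe_subtype,
        QuotientAddGroup.mk'_apply, QuotientAddGroup.eq_zero_iff]
      exact hAC hxA
    set φ := QuotientAddGroup.lift A' ((QuotientAddGroup.mk' C).comp S'.subtype) hker
    have hφ : Function.Surjective φ := by
      intro q
      obtain ⟨b, rfl⟩ := QuotientAddGroup.mk_surjective q
      obtain ⟨s, hs, e, he, rfl⟩ := hdecomp b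
      refine ⟨QuotientAddGroup.mk ⟨s, hs⟩, ?_⟩
      show QuotientAddGroup.mk s = QuotientAddGroup.mk (s + e)
      rw [QuotientAddGroup.eq]
      simpa [neg_add_cancel_left] using hEC e he
    exact Finite.of_surjective φ hφ
  refine ⟨C, hAC, AddSubgroup.finiteIndex_of_finite_quotient (H := C), ?_⟩
  -- torsion-free part
  intro D hDA hTF
  rw [tf_quot_iff] at hTF ⊢
  intro c hc n hn hnc
  obtain ⟨a, ha, e, he, rfl⟩ := hCmem c hc
  have hne : e = 0 := by
    have h1 : n • e ∈ S := by
      have : n • e = n • (a + e) - n • a := by rw [smul_add]; abel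
      rw [this]
      exact S.toAddSubgroup.sub_mem (hAS _ (hDA hnc)) (hAS _ (A.nsmul_mem ha n))
    have h2 : n • e ∈ E := E.toAddSubgroup.nsmul_mem he n
    have h3 : (n : ℤ) • e = 0 := by
      rw [natCast_zsmul]; exact hSE _ h1 h2
    rcases smul_eq_zero.mp h3 with h | h
    · exact absurd (by exact_mod_cast h) hn
    · exact h
  rw [hne, add_zero] at hnc ⊢
  exact hTF a ha n hn hnc
end

section
/- Every finitely generated right-angled Artin group is locally indicable, i.e., every nontrivial finitely generated subgroup admits a surjective homomorphism onto ℤ. -/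
/-- The defining relations of the right-angled Artin group on the graph `Γ`: commutators of
generators corresponding to adjacent vertices. -/
def raagRels {V : Type*} (Γ : SimpleGraph V) : Set (FreeGroup V) :=
  {r | ∃ v w : V, Γ.Adj v w ∧
    r = FreeGroup.of v * FreeGroup.of w * (FreeGroup.of v)⁻¹ * (FreeGroup.of w)⁻¹}

open Function

section FreeBits
variable {T : Type*}

theorem freeGroup_subsingleton [IsEmpty T] : Subsingleton (FreeGroup T) := by
  constructor
  intro a b
  apply FreeGroup.toWord_injective
  have h : ∀ x : FreeGroup T, x.toWord = [] := by
    intro x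
    rcases hx : x.toWord with _ | ⟨p, l⟩
    · rfl
    · exact (IsEmpty.false p.1).elim
  rw [h a, h b]

theorem exists_surj_of_isFreeGroup (G : Type*) [Group G] [IsFreeGroup G] [Nontrivial G] :
    ∃ f : G →* Multiplicative ℤ, Surjective f := by
  classical
  have hne : Nonempty (IsFreeGroup.Generators G) := by
    by_contra h
    rw [not_nonempty_iff] at h
    have : Subsingleton (FreeGroup (IsFreeGroup.Generators G)) := freeGroup_subsingleton
    have := (IsFreeGroup.toFreeGroup (G := G)).toEquiv.subsingleton
    rcases exists_pair_ne G with ⟨a, b, hab⟩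
    exact hab (Subsingleton.elim a b)
  obtain ⟨t₀⟩ := hne
  refine ⟨IsFreeGroup.lift (fun t => if t = t₀ then Multiplicative.ofAdd 1 else 1), ?_⟩
  intro y
  refine ⟨(IsFreeGroup.of t₀) ^ (Multiplicative.toAdd y), ?_⟩
  rw [map_zpow, IsFreeGroup.lift_of, if_pos rfl]
  rw [← ofAdd_zsmul]
  simp

theorem subgroup_surj_of_ne_bot {X : Type u} (S : Subgroup (FreeGroup X)) (hS : S ≠ ⊥) :
    ∃ f : S →* Multiplicative ℤ, Surjective f := by
  have : Nontrivial S := (Subgroup.nontrivial_iff_ne_bot S).2 hS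
  exact exists_surj_of_isFreeGroup S

end FreeBits

section ListBits
variable {α : Type*}

theorem exists_decomp_of_not_chain' :
    ∀ L : List (α × Bool), ¬ L.Chain' (fun p q => p.1 = q.1 → q.2 = p.2) →
      ∃ (L₁ : List (α × Bool)) (x : α) (b : Bool) (L₂ : List (α × Bool)),
        L = L₁ ++ (x, b) :: (x, !b) :: L₂
  | [] => by simp [List.Chain']
  | [a] => by simp [List.Chain']
  | a :: b :: l => by
    intro h
    simp only [List.Chain', List.isChain_cons_cons] at h
    by_cases hab : a.1 = b.1 → b.2 = a.2
    · have h2 : ¬ (b :: l).Chain' (fun p q => p.1 = q.1 → q.2 = p.2) := fun hc => h ⟨hab, hc⟩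
      obtain ⟨L₁, x, c, L₂, heq⟩ := exists_decomp_of_not_chain' (b :: l) h2
      exact ⟨a :: L₁, x, c, L₂, by rw [List.cons_append, heq]⟩
    · push_neg at hab
      obtain ⟨h1, h2⟩ := hab
      refine ⟨[], a.1, a.2, l, ?_⟩
      have hb : b = (a.1, !a.2) := by
        rcases b with ⟨b1, b2⟩
        rcases a with ⟨a1, a2⟩
        simp only at h1 h2 ⊢
        cases a2 <;> cases b2 <;> simp_all
      rw [List.nil_append, hb]

theorem chain'_of_reduced [DecidableEq α] (L : List (α × Bool)) (h : FreeGroup.reduce L = L) :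
    L.Chain' (fun p q => p.1 = q.1 → q.2 = p.2) := by
  by_contra hc
  obtain ⟨L₁, x, b, L₂, heq⟩ := exists_decomp_of_not_chain' L hc
  exact FreeGroup.reduce.not (h.trans heq)

end ListBits

namespace RaagLI

variable {A : Type u} [Group A] (C : Subgroup A)

/-- coset representative -/
noncomputable def rep (x : A ⧸ C) : A := Quotient.out x

theorem rep_spec (x : A ⧸ C) : ((rep C x : A) : A ⧸ C) = x := QuotientGroup.out_eq' x

theorem rep_inv_mul_mem {x y : A ⧸ C} : (rep C x)⁻¹ * rep C y ∈ C ↔ x = y := by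
  rw [← QuotientGroup.eq, rep_spec, rep_spec]

/-- sign of a letter -/
def sgn (b : Bool) : ℤˣ := if b then 1 else -1

theorem sgn_inj {b c : Bool} (h : sgn b = sgn c) : b = c := by
  cases b <;> cases c <;> simp_all [sgn]

/-- the list of an HNN reduced word corresponding to a free group word -/
noncomputable def tl : List ((A ⧸ C) × Bool) → List (ℤˣ × A)
  | [] => []
  | [(x, b)] => [(sgn b, (rep C x)⁻¹)]
  | (x, b) :: (y, c) :: rest => (sgn b, (rep C x)⁻¹ * rep C y) :: tl ((y, c) :: rest)

/-- the head of the HNN reduced word -/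
noncomputable def hd : List ((A ⧸ C) × Bool) → A
  | [] => 1
  | (x, _) :: _ => rep C x

theorem tl_eq_nil : ∀ {L : List ((A ⧸ C) × Bool)}, tl C L = [] → L = []
  | [] => fun _ => rfl
  | [(x, b)] => by simp [tl]
  | (x, b) :: (y, c) :: rest => by simp [tl]

theorem toSubgroup_eq (u : ℤˣ) : HNNExtension.toSubgroup C C u = C := by
  rcases Int.units_eq_one_or u with rfl | rfl <;> simp

theorem tl_head_fst : ∀ (y : A ⧸ C) (c : Bool) (rest : List ((A ⧸ C) × Bool)),
    (tl C ((y, c) :: rest)).head?.map Prod.fst = some (sgn c)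
  | y, c, [] => rfl
  | y, c, (z, e) :: rest => rfl

theorem tl_chain : ∀ L : List ((A ⧸ C) × Bool),
    L.Chain' (fun p q => p.1 = q.1 → q.2 = p.2) →
    (tl C L).Chain' (fun a b => a.2 ∈ HNNExtension.toSubgroup C C a.1 → a.1 = b.1)
  | [] => by simp [tl, List.Chain']
  | [(x, b)] => by simp [tl, List.Chain']
  | (x, b) :: (y, c) :: rest => by
    intro h
    obtain ⟨h1, h2⟩ := List.isChain_cons_cons.1 h
    show List.Chain' _ ((sgn b, (rep C x)⁻¹ * rep C y) :: tl C ((y, c) :: rest))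
    refine List.isChain_cons.2 ⟨?_, tl_chain _ h2⟩
    intro p hp hmem
    have hfst : p.1 = sgn c := by
      have h3 := tl_head_fst C y c rest
      rw [Option.mem_def] at hp
      rw [hp] at h3
      simpa using h3
    rw [toSubgroup_eq] at hmem
    have hxy : x = y := (rep_inv_mul_mem C).1 hmem
    have hcb : c = b := h1 hxy
    show sgn b = p.1
    rw [hfst, hcb]
  termination_by L => L.length

end RaagLI

namespace RaagLI
variable {A : Type u} [Group A] (C : Subgroup A)

/-- conjugates of the stable letter, indexed by cosets -/
noncomputable def Hgen (x : A ⧸ C) : HNNExtension A C C (MulEquiv.refl C) :=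
  HNNExtension.of (rep C x) * HNNExtension.t * (HNNExtension.of (rep C x))⁻¹

/-- the homomorphism from the free group on cosets -/
noncomputable def F : FreeGroup (A ⧸ C) →* HNNExtension A C C (MulEquiv.refl C) :=
  FreeGroup.lift (Hgen C)

theorem t_comm {c : A} (hc : c ∈ C) :
    HNNExtension.t * HNNExtension.of c = HNNExtension.of c
      * (HNNExtension.t : HNNExtension A C C (MulEquiv.refl C)) := by
  simpa using HNNExtension.t_mul_of (φ := MulEquiv.refl C) ⟨c, hc⟩

theorem conj_t_eq (a : A) :
    HNNExtension.of a * HNNExtension.t * (HNNExtension.of a)⁻¹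
      = Hgen C ((a : A ⧸ C)) := by
  have hmem : a⁻¹ * rep C ((a : A ⧸ C)) ∈ C := by
    rw [← QuotientGroup.eq, rep_spec]
  set c := a⁻¹ * rep C ((a : A ⧸ C)) with hc
  have hrep : rep C ((a : A ⧸ C)) = a * c := by rw [hc, mul_inv_cancel_left]
  have h1 := t_comm C hmem
  rw [Hgen, hrep]
  simp only [map_mul, mul_inv_rev]
  rw [mul_assoc (HNNExtension.of a), mul_assoc (HNNExtension.of a), ← h1]
  group

theorem conj_t_mem (a : A) :
    HNNExtension.of a * HNNExtension.t * (HNNExtension.of a)⁻¹ ∈ (F C).range := by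
  rw [conj_t_eq]
  exact ⟨FreeGroup.of _, FreeGroup.lift_apply_of⟩

theorem t_mem : (HNNExtension.t : HNNExtension A C C (MulEquiv.refl C)) ∈ (F C).range := by
  have := conj_t_mem C 1
  simpa using this

theorem hp_mem (x : HNNExtension A C C (MulEquiv.refl C)) : x ∈ Subgroup.closure
    (Set.range (HNNExtension.of : A → HNNExtension A C C (MulEquiv.refl C))
      ∪ {HNNExtension.t}) := by
  induction x using HNNExtension.induction_on with
  | of g => exact Subgroup.subset_closure (Or.inl ⟨g, rfl⟩)
  | t => exact Subgroup.subset_closure (Or.inr rfl)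
  | mul x y hx hy => exact mul_mem hx hy
  | inv x hx => exact inv_mem hx

theorem hp_top : Subgroup.closure
    (Set.range (HNNExtension.of : A → HNNExtension A C C (MulEquiv.refl C))
      ∪ {HNNExtension.t}) = ⊤ :=
  eq_top_iff.2 fun x _ => hp_mem C x

theorem range_F_eq_closure : (F C).range = Subgroup.closure (Set.range (Hgen C)) := by
  exact FreeGroup.range_lift_eq_closure

theorem conj_mem {s : HNNExtension A C C (MulEquiv.refl C)} (a : A) (hs : s ∈ (F C).range) :
    HNNExtension.of a * s * (HNNExtension.of a)⁻¹ ∈ (F C).range := by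
  rw [range_F_eq_closure] at hs
  induction hs using Subgroup.closure_induction with
  | mem x hx =>
    obtain ⟨y, rfl⟩ := hx
    rw [Hgen, ← mul_assoc, ← mul_assoc, ← map_mul, mul_assoc, mul_assoc, ← mul_inv_rev, ← map_mul]
    exact conj_t_mem C _
  | one => simpa using one_mem (F C).range
  | mul x y hx hy ihx ihy =>
    have : HNNExtension.of a * (x * y) * (HNNExtension.of a)⁻¹
        = (HNNExtension.of a * x * (HNNExtension.of a)⁻¹)
          * (HNNExtension.of a * y * (HNNExtension.of a)⁻¹) := by group
    rw [this]; exact mul_mem ihx ihy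
  | inv x hx ihx =>
    have : HNNExtension.of a * x⁻¹ * (HNNExtension.of a)⁻¹
        = (HNNExtension.of a * x * (HNNExtension.of a)⁻¹)⁻¹ := by group
    rw [this]; exact inv_mem ihx

theorem range_F_normal : ((F C).range).Normal := by
  rw [← Subgroup.normalizer_eq_top_iff, ← top_le_iff, ← hp_top C, Subgroup.closure_le]
  rintro x (⟨a, rfl⟩ | rfl)
  · rw [SetLike.mem_coe, Subgroup.mem_normalizer_iff]
    intro h
    constructor
    · intro hh; exact conj_mem C a hh
    · intro hh
      have := conj_mem C a⁻¹ hh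
      simpa [map_inv, mul_assoc] using this
  · exact Subgroup.le_normalizer (t_mem C)

/-- the retraction killing the stable letter -/
noncomputable def retr : HNNExtension A C C (MulEquiv.refl C) →* A :=
  HNNExtension.lift (MonoidHom.id A) 1 (fun a => by simp)

@[simp] theorem retr_of (a : A) : retr C (HNNExtension.of a) = a := by
  simp [retr]

@[simp] theorem retr_t : retr C (HNNExtension.t) = 1 := by
  simp [retr]

theorem range_F_le_ker : (F C).range ≤ (retr C).ker := by
  rintro _ ⟨w, rfl⟩
  have : (retr C).comp (F C) = 1 := by
    apply FreeGroup.ext_hom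
    intro x
    simp [F, Hgen]
  have h2 : (retr C) ((F C) w) = ((retr C).comp (F C)) w := rfl
  rw [MonoidHom.mem_ker, h2, this]
  rfl

theorem ker_retr_eq : (retr C).ker = (F C).range := by
  haveI := range_F_normal C
  refine le_antisymm ?_ (range_F_le_ker C)
  set S := (F C).range
  set q := QuotientGroup.mk' S with hq
  have hqt : q HNNExtension.t = 1 := (QuotientGroup.eq_one_iff _).2 (t_mem C)
  set j := q.comp (HNNExtension.of (G := A) (A := C) (B := C) (φ := MulEquiv.refl C)) with hj
  have hj_surj : Surjective j := by
    intro y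
    obtain ⟨x, rfl⟩ := QuotientGroup.mk'_surjective S y
    have hx : x ∈ Subgroup.closure
        (Set.range (HNNExtension.of : A → HNNExtension A C C (MulEquiv.refl C))
          ∪ {HNNExtension.t}) := by rw [hp_top C]; trivial
    induction hx using Subgroup.closure_induction with
    | mem z hz =>
      rcases hz with ⟨a, rfl⟩ | rfl
      · exact ⟨a, rfl⟩
      · exact ⟨1, by simpa [hj, hq] using hqt.symm⟩
    | one => exact ⟨1, by simp⟩
    | mul z w hz hw ihz ihw =>
      obtain ⟨a, ha⟩ := ihz; obtain ⟨b, hb⟩ := ihw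
      exact ⟨a * b, by rw [map_mul, map_mul, ha, hb]⟩
    | inv z hz ihz =>
      obtain ⟨a, ha⟩ := ihz
      exact ⟨a⁻¹, by rw [map_inv, map_inv, ha]⟩
  set rbar := QuotientGroup.lift S (retr C) (range_F_le_ker C) with hrbar
  intro x hx
  obtain ⟨a, ha⟩ := hj_surj (q x)
  have h1 : rbar (j a) = a := by simp [hj, hrbar, hq]
  have h2 : rbar (q x) = retr C x := by simp [hrbar, hq]
  have hx1 : retr C x = 1 := hx
  have ha1 : a = 1 := by rw [← h1, ha, h2, hx1]
  have : q x = 1 := by rw [← ha, ha1, map_one]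
  exact (QuotientGroup.eq_one_iff _).1 this

end RaagLI
namespace RaagLI
variable {A : Type u} [Group A] (C : Subgroup A)

theorem sgn_pow (x : A ⧸ C) (b : Bool) :
    (cond b (Hgen C x) (Hgen C x)⁻¹)
      = HNNExtension.of (rep C x) * HNNExtension.t ^ ((sgn b : ℤˣ) : ℤ)
        * (HNNExtension.of (rep C x))⁻¹ := by
  cases b <;> simp [Hgen, sgn, mul_assoc]

theorem tl_prod : ∀ L : List ((A ⧸ C) × Bool),
    HNNExtension.of (hd C L) *
      ((tl C L).map fun p => HNNExtension.t ^ ((p.1 : ℤˣ) : ℤ) * HNNExtension.of p.2).prod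
      = F C (FreeGroup.mk L)
  | [] => by
    simp only [hd, tl, List.map_nil, List.prod_nil, mul_one, map_one]
    rw [← FreeGroup.one_eq_mk, map_one]
  | [(x, b)] => by
    simp only [hd, tl, F, FreeGroup.lift_mk, List.map_cons, List.map_nil, List.prod_cons,
      List.prod_nil, mul_one]
    rw [sgn_pow]
    simp [map_inv, mul_assoc]
  | (x, b) :: (y, c) :: rest => by
    have ih := tl_prod ((y, c) :: rest)
    simp only [F, FreeGroup.lift_mk, List.map_cons, List.prod_cons] at ih ⊢
    rw [← ih]
    show HNNExtension.of (rep C x) *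
      ((HNNExtension.t ^ ((sgn b : ℤˣ) : ℤ) * HNNExtension.of ((rep C x)⁻¹ * rep C y)) * _) = _
    rw [sgn_pow]
    simp only [hd, map_mul, map_inv]
    group
    rw [List.prod_eq_foldr]
  termination_by L => L.length

theorem F_injective : Injective (F C) := by
  classical
  rw [injective_iff_map_eq_one]
  intro w hw
  by_contra hne
  have hred := FreeGroup.reduce_toWord w
  have hch := chain'_of_reduced w.toWord hred
  set RW : HNNExtension.NormalWord.ReducedWord A C C := ⟨hd C w.toWord, tl C w.toWord, tl_chain C _ hch⟩
    with hRW
  have hprod : RW.prod (MulEquiv.refl C) = 1 := by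
    rw [HNNExtension.NormalWord.ReducedWord.prod]
    have h2 := tl_prod C w.toWord
    rw [FreeGroup.mk_toWord] at h2
    exact h2.trans hw
  have hnil : RW.toList = [] :=
    HNNExtension.ReducedWord.toList_eq_nil_of_mem_of_range (MulEquiv.refl C) RW
      (by rw [hprod]; exact ⟨1, map_one _⟩)
  exact hne (FreeGroup.toWord_eq_nil_iff.1 (tl_eq_nil C hnil))

end RaagLI
section RaagGraph

theorem comm_of_comm_rel {G : Type*} [Group G] {a b : G} (h : a * b * a⁻¹ * b⁻¹ = 1) :
    a * b = b * a := by
  rw [mul_inv_eq_one] at h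
  rw [mul_inv_eq_iff_eq_mul] at h
  exact h

theorem comm_rel_of_comm {G : Type*} [Group G] {a b : G} (h : a * b = b * a) :
    a * b * a⁻¹ * b⁻¹ = 1 := by
  rw [h]; group

variable {V : Type u}

theorem raag_adj_comm (Γ : SimpleGraph V) {x y : V} (h : Γ.Adj x y) :
    (PresentedGroup.of x : PresentedGroup (raagRels Γ)) * PresentedGroup.of y
      = PresentedGroup.of y * PresentedGroup.of x := by
  apply comm_of_comm_rel
  have hr : (FreeGroup.of x * FreeGroup.of y * (FreeGroup.of x)⁻¹ * (FreeGroup.of y)⁻¹)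
      ∈ raagRels Γ := ⟨x, y, h, rfl⟩
  have h1 : PresentedGroup.mk (raagRels Γ)
      (FreeGroup.of x * FreeGroup.of y * (FreeGroup.of x)⁻¹ * (FreeGroup.of y)⁻¹) = 1 :=
    (QuotientGroup.eq_one_iff _).2 (Subgroup.subset_normalClosure hr)
  simpa [map_mul, map_inv, PresentedGroup.of] using h1

variable (Γ : SimpleGraph V) (v : V)

/-- the graph with the vertex `v` removed -/
def mGraph : SimpleGraph {w : V // w ≠ v} := SimpleGraph.comap Subtype.val Γ

/-- the subgroup generated by the link of `v` -/
def linkC : Subgroup (PresentedGroup (raagRels (mGraph Γ v))) :=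
  Subgroup.closure {a | ∃ (w : V) (h : Γ.Adj v w), a = PresentedGroup.of ⟨w, (Γ.ne_of_adj h).symm⟩}

/-- inclusion of the smaller RAAG -/
def raagIncl : PresentedGroup (raagRels (mGraph Γ v)) →* PresentedGroup (raagRels Γ) :=
  PresentedGroup.toGroup (f := fun w => PresentedGroup.of w.val)
    (by
      rintro r ⟨x, y, hxy, rfl⟩
      simp only [map_mul, map_inv, FreeGroup.lift_apply_of]
      exact comm_rel_of_comm (raag_adj_comm Γ hxy))

@[simp] theorem raagIncl_of (x : {w : V // w ≠ v}) :
    raagIncl Γ v (PresentedGroup.of x) = PresentedGroup.of x.val :=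
  PresentedGroup.toGroup.of _

theorem of_v_comm_linkC : ∀ a ∈ linkC Γ v,
    (PresentedGroup.of v : PresentedGroup (raagRels Γ)) * raagIncl Γ v a
      = raagIncl Γ v a * PresentedGroup.of v := by
  intro a ha
  induction ha using Subgroup.closure_induction with
  | mem b hb =>
    obtain ⟨w, hw, rfl⟩ := hb
    rw [raagIncl_of]
    exact raag_adj_comm Γ hw
  | one => simp
  | mul b c hb hc ihb ihc => rw [map_mul, ← mul_assoc, ihb, mul_assoc, ihc, mul_assoc]
  | inv b hb ihb =>
    rw [map_inv]
    have : Commute (PresentedGroup.of v (rels := raagRels Γ)) (raagIncl Γ v b) := ihb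
    exact this.inv_right

open HNNExtension Classical in
/-- the generator map into the HNN extension -/
noncomputable def fgen (w : V) :
    HNNExtension (PresentedGroup (raagRels (mGraph Γ v))) (linkC Γ v) (linkC Γ v)
      (MulEquiv.refl _) :=
  if h : w = v then HNNExtension.t else HNNExtension.of (PresentedGroup.of ⟨w, h⟩)

theorem fgen_v : fgen Γ v v = HNNExtension.t := by simp [fgen]

theorem fgen_ne {w : V} (h : w ≠ v) :
    fgen Γ v w = HNNExtension.of (PresentedGroup.of ⟨w, h⟩) := by simp [fgen, h]

theorem fgen_comm {x y : V} (h : Γ.Adj x y) : fgen Γ v x * fgen Γ v y = fgen Γ v y * fgen Γ v x := by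
  have hxy : x ≠ y := Γ.ne_of_adj h
  by_cases hx : x = v
  · rw [hx] at h ⊢
    have hy : y ≠ v := (Γ.ne_of_adj h).symm
    rw [fgen_v, fgen_ne Γ v hy]
    have hmem : (PresentedGroup.of ⟨y, hy⟩ : PresentedGroup (raagRels (mGraph Γ v)))
        ∈ linkC Γ v := Subgroup.subset_closure ⟨y, h, rfl⟩
    simpa using HNNExtension.t_mul_of (φ := MulEquiv.refl (linkC Γ v)) ⟨_, hmem⟩
  · by_cases hy : y = v
    · rw [hy] at h ⊢
      have hx' : x ≠ v := hx
      rw [fgen_v, fgen_ne Γ v hx']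
      have hmem : (PresentedGroup.of ⟨x, hx'⟩ : PresentedGroup (raagRels (mGraph Γ v)))
          ∈ linkC Γ v := Subgroup.subset_closure ⟨x, h.symm, rfl⟩
      have h2 := HNNExtension.t_mul_of (φ := MulEquiv.refl (linkC Γ v))
        (⟨_, hmem⟩ : linkC Γ v)
      simpa using h2.symm
    · rw [fgen_ne Γ v hx, fgen_ne Γ v hy]
      rw [← map_mul, ← map_mul]
      congr 1
      have hadj : (mGraph Γ v).Adj ⟨x, hx⟩ ⟨y, hy⟩ := h
      exact raag_adj_comm (mGraph Γ v) hadj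

/-- the homomorphism to the HNN extension -/
noncomputable def fHom : PresentedGroup (raagRels Γ) →*
    HNNExtension (PresentedGroup (raagRels (mGraph Γ v))) (linkC Γ v) (linkC Γ v)
      (MulEquiv.refl _) :=
  PresentedGroup.toGroup (f := fgen Γ v)
    (by
      rintro r ⟨x, y, hxy, rfl⟩
      simp only [map_mul, map_inv, FreeGroup.lift_apply_of]
      exact comm_rel_of_comm (fgen_comm Γ v hxy))

@[simp] theorem fHom_of (w : V) : fHom Γ v (PresentedGroup.of w) = fgen Γ v w :=
  PresentedGroup.toGroup.of _

/-- the homomorphism from the HNN extension -/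
noncomputable def gHom :
    HNNExtension (PresentedGroup (raagRels (mGraph Γ v))) (linkC Γ v) (linkC Γ v)
      (MulEquiv.refl _) →* PresentedGroup (raagRels Γ) :=
  HNNExtension.lift (raagIncl Γ v) (PresentedGroup.of v)
    (by
      intro c
      exact (of_v_comm_linkC Γ v c.1 c.2).trans rfl)

@[simp] theorem gHom_of (a : PresentedGroup (raagRels (mGraph Γ v))) :
    gHom Γ v (HNNExtension.of a) = raagIncl Γ v a := HNNExtension.lift_of _ _ _ _

@[simp] theorem gHom_t : gHom Γ v HNNExtension.t = PresentedGroup.of v :=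
  HNNExtension.lift_t _ _ _

/-- the RAAG as an HNN extension -/
noncomputable def raagHNNEquiv : PresentedGroup (raagRels Γ) ≃*
    HNNExtension (PresentedGroup (raagRels (mGraph Γ v))) (linkC Γ v) (linkC Γ v)
      (MulEquiv.refl _) := by
  refine MonoidHom.toMulEquiv (fHom Γ v) (gHom Γ v) ?_ ?_
  · apply PresentedGroup.ext
    intro w
    simp only [MonoidHom.comp_apply, MonoidHom.id_apply, fHom_of]
    by_cases hw : w = v
    · subst hw; rw [fgen_v, gHom_t]
    · rw [fgen_ne Γ v hw, gHom_of, raagIncl_of]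
  · apply HNNExtension.hom_ext
    · apply PresentedGroup.ext
      intro x
      simp only [MonoidHom.comp_apply, MonoidHom.id_apply, gHom_of, raagIncl_of]
      rw [fHom_of, fgen_ne Γ v x.2]
    · simp only [MonoidHom.comp_apply, MonoidHom.id_apply, gHom_t, fHom_of, fgen_v]

end RaagGraph
section Assemble
open Function

theorem subgroup_fg_map {G : Type*} {H' : Type*} [Group G] [Group H'] {K : Subgroup G}
    (h : K.FG) (f : G →* H') : (K.map f).FG := by
  classical
  obtain ⟨S, hS⟩ := h
  exact ⟨S.image f, by rw [Finset.coe_image, ← MonoidHom.map_closure, hS]⟩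

theorem raag_LI_aux (n : ℕ) : ∀ (V : Type u), Finite V → ∀ (Γ : SimpleGraph V),
    Nat.card V = n → ∀ H : Subgroup (PresentedGroup (raagRels Γ)), H ≠ ⊥ → H.FG →
    ∃ f : H →* Multiplicative ℤ, Function.Surjective f := by
  induction n using Nat.strong_induction_on with
  | _ n ih =>
  intro V hFin Γ hcard H hH hfg
  rcases isEmpty_or_nonempty V with hV | hV
  · exfalso
    apply hH
    rw [Subgroup.eq_bot_iff_forall]
    intro x hx
    haveI : Subsingleton (FreeGroup V) := freeGroup_subsingleton
    induction x using PresentedGroup.induction_on with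
    | _ z => rw [Subsingleton.elim z 1, map_one]
  · obtain ⟨v⟩ := hV
    set C := linkC Γ v with hC
    set e := raagHNNEquiv Γ v with he
    set em := (raagHNNEquiv Γ v).toMonoidHom with hem
    set ψ := (RaagLI.retr C).comp em with hψ
    by_cases hbot : H.map ψ = ⊥
    · -- the subgroup embeds in a free group
      have hle : H.map em ≤ (RaagLI.F C).range := by
        rw [← RaagLI.ker_retr_eq]
        intro x hx
        rcases Subgroup.mem_map.1 hx with ⟨y, hy, rfl⟩
        rw [MonoidHom.mem_ker]
        have h2 : ψ y ∈ H.map ψ := Subgroup.mem_map_of_mem _ hy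
        rw [hbot, Subgroup.mem_bot] at h2
        exact h2
      set S2 := (H.map em).comap (RaagLI.F C) with hS2
      have hS2map : S2.map (RaagLI.F C) = H.map em := by
        rw [hS2, Subgroup.map_comap_eq, inf_eq_right.2 hle]
      have hmapne : H.map em ≠ ⊥ := by
        intro h0
        have hinj : Function.Injective em := (raagHNNEquiv Γ v).injective
        exact hH ((Subgroup.map_eq_bot_iff_of_injective H hinj).1 h0)
      have hS2ne : S2 ≠ ⊥ := by
        intro h0
        apply hmapne
        rw [← hS2map, h0]
        exact Subgroup.map_bot _
      obtain ⟨f0, hf0⟩ := subgroup_surj_of_ne_bot S2 hS2ne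
      let e1 : H ≃* H.map em := Subgroup.equivMapOfInjective H em (raagHNNEquiv Γ v).injective
      let e2 : S2 ≃* S2.map (RaagLI.F C) :=
        Subgroup.equivMapOfInjective S2 _ (RaagLI.F_injective C)
      let e3 : S2.map (RaagLI.F C) ≃* H.map em := MulEquiv.subgroupCongr hS2map
      refine ⟨f0.comp ((e2.symm.toMonoidHom.comp e3.symm.toMonoidHom).comp e1.toMonoidHom), ?_⟩
      simp only [MonoidHom.coe_comp]
      exact hf0.comp (((e2.symm.surjective).comp (e3.symm.surjective)).comp (e1.surjective))
    · -- induct on the smaller graph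
      have hfg2 : (H.map ψ).FG := subgroup_fg_map hfg ψ
      have hcV : Nat.card V = Nat.card {w : V // w ≠ v} + 1 := by
        classical
        rw [← Nat.card_congr (Equiv.optionSubtypeNe v), Finite.card_option]
      have hlt : Nat.card {w : V // w ≠ v} < n := by
        rw [hcard] at hcV; omega
      obtain ⟨f1, hf1⟩ := ih _ hlt {w : V // w ≠ v} inferInstance (mGraph Γ v) rfl
        (H.map ψ) hbot hfg2
      exact ⟨f1.comp (ψ.subgroupMap H), hf1.comp (ψ.subgroupMap_surjective H)⟩

end Assemble


/-- Every finitely generated right-angled Artin group is locally indicable: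
every nontrivial finitely generated subgroup admits a surjective homomorphism onto `ℤ`. -/
theorem raag_locallyIndicable {V : Type*} [Finite V] (Γ : SimpleGraph V)
    (H : Subgroup (PresentedGroup (raagRels Γ))) (hH : H ≠ ⊥) (hfg : H.FG) :
    ∃ f : H →* Multiplicative ℤ, Function.Surjective f := by
  exact raag_LI_aux (Nat.card V) V ‹Finite V› Γ rfl H hH hfg
end

section
/- Let G be a group with subgroups N ⊴ H ≤ G forming a Cohen–Lyndon triple, i.e., there exists a left transversal T of H⟪N⟫ in G with ⟪N⟫ = the free product over t ∈ T of tNt⁻¹, where ⟪N⟫ is the normal closure of N in G. Then the natural map H/N → G/⟪N⟫ is injective. -/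
/-- A subgroup `K` of `G` is the internal free product of the family of subgroups `Hs i` if the
canonical homomorphism from the abstract free product `⋆ᵢ Hs i` to `G` is injective with range
exactly `K`. -/
def IsInternalFreeProduct {G : Type*} [Group G] {ι : Type*}
    (K : Subgroup G) (Hs : ι → Subgroup G) : Prop :=
  Function.Injective (Monoid.CoprodI.lift fun i => (Hs i).subtype) ∧
  MonoidHom.range (Monoid.CoprodI.lift fun i => (Hs i).subtype) = K

/-- The conjugate `t N t⁻¹` of a subgroup `N ≤ G` by an element `t : G`. -/
def conjSubgroup {G : Type*} [Group G] (t : G) (N : Subgroup G) : Subgroup G :=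
  Subgroup.map (MulAut.conj t).toMonoidHom N

/-- `(G, H, N)` is a Cohen–Lyndon triple: there exists a left transversal `T` of `H⟪N⟫` in `G`
such that the normal closure `⟪N⟫` of `N` in `G` is the internal free product of the conjugates
`t N t⁻¹`, `t ∈ T`. -/
def CohenLyndon {G : Type*} [Group G] (H : Subgroup G) (N : Subgroup H) : Prop :=
  ∃ T : Set G,
    Subgroup.IsComplement T
      ((H ⊔ Subgroup.normalClosure ((N.map H.subtype : Subgroup G) : Set G) : Subgroup G) :
        Set G) ∧
    IsInternalFreeProduct (Subgroup.normalClosure ((N.map H.subtype : Subgroup G) : Set G))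
      (fun t : T => conjSubgroup (t : G) (N.map H.subtype))

section FreeProductLemmas

open Monoid CoprodI

variable {ι : Type*} {G : ι → Type*} [∀ i, Group (G i)] [DecidableEq ι] [∀ i, DecidableEq (G i)]

theorem word_prod_injective :
    Function.Injective (Monoid.CoprodI.Word.prod : Monoid.CoprodI.Word G → Monoid.CoprodI G) :=
  Monoid.CoprodI.Word.equiv.symm.injective

/-- The reduced word of `u⁻¹` is the reverse of the letterwise inverse of that of `u`. -/
theorem equiv_inv_toList (u : Monoid.CoprodI G) :
    (Word.equiv u⁻¹).toList = ((Word.equiv u).toList.map fun l => ⟨l.1, l.2⁻¹⟩).reverse := by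
  set w := Word.equiv u with hw
  have hne : ∀ l ∈ (w.toList.map fun l : Σ i, G i => (⟨l.1, l.2⁻¹⟩ : Σ i, G i)).reverse,
      l.2 ≠ 1 := by
    intro l hl
    rw [List.mem_reverse, List.mem_map] at hl
    obtain ⟨a, ha, rfl⟩ := hl
    simpa using w.ne_one a ha
  have hchain : ((w.toList.map fun l : Σ i, G i => (⟨l.1, l.2⁻¹⟩ : Σ i, G i)).reverse).Chain'
      fun l l' => l.1 ≠ l'.1 := by
    show List.IsChain _ _
    rw [List.isChain_reverse, List.isChain_map]
    exact w.chain_ne.imp fun _ _ h => h.symm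
  set w' : Word G := ⟨_, hne, hchain⟩ with hw'
  have hprod : w'.prod = u⁻¹ := by
    have hu : u = w.prod := (Word.equiv.symm_apply_apply u).symm
    rw [hu]
    show (List.prod _) = _
    simp only [Word.prod, hw', List.map_reverse, List.map_map]
    rw [List.prod_inv_reverse, List.map_map]
    simp [Function.comp_def, map_inv]
  have : Word.equiv u⁻¹ = w' := by
    rw [← hprod]
    exact Word.equiv.apply_symm_apply w'
  rw [this]

variable {ι : Type*} {G : ι → Type*} [∀ i, Group (G i)] [DecidableEq ι] [∀ i, DecidableEq (G i)]

theorem exists_strip (u : Monoid.CoprodI G) {i₀ : ι} {m : G i₀}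
    (hfst : (Word.equiv u).toList.head? = some ⟨i₀, m⟩) :
    ∃ v : Monoid.CoprodI G, u = of m * v ∧
      (Word.equiv v).toList.length + 1 = (Word.equiv u).toList.length := by
  set w := Word.equiv u with hw
  obtain ⟨x, xs, hxs⟩ : ∃ x xs, w.toList = x :: xs := by
    cases h : w.toList with
    | nil => rw [h] at hfst; simp at hfst
    | cons a l => exact ⟨a, l, rfl⟩
  have hx : x = ⟨i₀, m⟩ := by rw [hxs] at hfst; simpa using hfst
  subst hx
  have hne : ∀ l ∈ xs, Sigma.snd l ≠ 1 := fun l hl => w.ne_one l (hxs ▸ List.mem_cons_of_mem _ hl)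
  have hchain : xs.Chain' (fun l l' => l.1 ≠ l'.1) := by
    have h2 := w.chain_ne; rw [hxs, List.isChain_cons] at h2; exact h2.2
  refine ⟨(⟨xs, hne, hchain⟩ : Word G).prod, ?_, ?_⟩
  · conv_lhs => rw [← Word.equiv.symm_apply_apply u]
    show w.prod = _
    rw [Word.prod, hxs]
    simp [Word.prod]
  · have he : Word.equiv (⟨xs, hne, hchain⟩ : Word G).prod = ⟨xs, hne, hchain⟩ :=
      Word.equiv.apply_symm_apply _
    rw [he, hxs]
    rfl

theorem mem_range_of_conj (i₀ : ι) (hne : ∃ g : G i₀, g ≠ 1) :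
    ∀ (n : ℕ) (u : Monoid.CoprodI G), (Word.equiv u).toList.length ≤ n →
      (∀ x ∈ MonoidHom.range (of : G i₀ →* Monoid.CoprodI G),
        u * x * u⁻¹ ∈ MonoidHom.range (of : G i₀ →* Monoid.CoprodI G)) →
      (∀ x ∈ MonoidHom.range (of : G i₀ →* Monoid.CoprodI G),
        u⁻¹ * x * u ∈ MonoidHom.range (of : G i₀ →* Monoid.CoprodI G)) →
      u ∈ MonoidHom.range (of : G i₀ →* Monoid.CoprodI G) := by
  intro n
  induction n with
  | zero =>
    intro u hlen _ _
    have hempty : Word.equiv u = Word.empty := by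
      ext1
      simpa using List.length_eq_zero_iff.mp (Nat.le_zero.mp hlen)
    have : u = 1 := by
      have := congrArg Word.prod hempty
      rwa [show (Word.equiv u).prod = u from Word.equiv.symm_apply_apply u,
        Word.prod_empty] at this
    exact this ▸ one_mem _
  | succ n ih =>
    intro u hlen h1 h2
    by_cases hemp : Word.equiv u = Word.empty
    · have : u = 1 := by
        have := congrArg Word.prod hemp
        rwa [show (Word.equiv u).prod = u from Word.equiv.symm_apply_apply u,
          Word.prod_empty] at this
      exact this ▸ one_mem _
    obtain ⟨i, j, w', hw'⟩ := NeWord.of_word (Word.equiv u) hemp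
    have hprod : w'.prod = u := by
      rw [NeWord.prod, hw']
      exact Word.equiv.symm_apply_apply u
    have hlist : (Word.equiv u).toList = w'.toList := by rw [← hw']; rfl
    by_cases hi : i = i₀
    · subst hi
      have hfst : (Word.equiv u).toList.head? = some ⟨i, w'.head⟩ := by
        rw [hlist]; exact w'.toList_head?
      obtain ⟨v, huv, hlenv⟩ := exists_strip u hfst
      have hofh : of w'.head ∈ MonoidHom.range (of : G i →* Monoid.CoprodI G) := ⟨w'.head, rfl⟩
      have hv : v = (of w'.head)⁻¹ * u := by rw [huv]; group
      have hv1 : ∀ x ∈ MonoidHom.range (of : G i →* Monoid.CoprodI G),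
          v * x * v⁻¹ ∈ MonoidHom.range (of : G i →* Monoid.CoprodI G) := by
        intro x hx
        have := mul_mem (mul_mem (inv_mem hofh) (h1 x hx)) hofh
        rw [hv]; convert this using 1; group
      have hv2 : ∀ x ∈ MonoidHom.range (of : G i →* Monoid.CoprodI G),
          v⁻¹ * x * v ∈ MonoidHom.range (of : G i →* Monoid.CoprodI G) := by
        intro x hx
        have hx' : of w'.head * x * (of w'.head)⁻¹ ∈
            MonoidHom.range (of : G i →* Monoid.CoprodI G) :=
          mul_mem (mul_mem hofh hx) (inv_mem hofh)
        have := h2 _ hx'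
        rw [hv]; convert this using 1; group
      have hvmem := ih v (by omega) hv1 hv2
      rw [huv]; exact mul_mem hofh hvmem
    by_cases hj : j = i₀
    · subst hj
      have hfst : (Word.equiv u⁻¹).toList.head? = some ⟨j, w'.last⁻¹⟩ := by
        rw [equiv_inv_toList, List.head?_reverse, List.getLast?_map, hlist,
          w'.toList_getLast?]
        rfl
      obtain ⟨v, huv, hlenv⟩ := exists_strip u⁻¹ hfst
      have hleninv : (Word.equiv u⁻¹).toList.length = (Word.equiv u).toList.length := by
        rw [equiv_inv_toList]; simp
      have hofh : of w'.last⁻¹ ∈ MonoidHom.range (of : G j →* Monoid.CoprodI G) :=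
        ⟨w'.last⁻¹, rfl⟩
      have hv : v = (of w'.last⁻¹)⁻¹ * u⁻¹ := by rw [huv]; group
      have hv1 : ∀ x ∈ MonoidHom.range (of : G j →* Monoid.CoprodI G),
          v * x * v⁻¹ ∈ MonoidHom.range (of : G j →* Monoid.CoprodI G) := by
        intro x hx
        have := mul_mem (mul_mem (inv_mem hofh) (h2 x hx)) hofh
        rw [hv]; convert this using 1; group
      have hv2 : ∀ x ∈ MonoidHom.range (of : G j →* Monoid.CoprodI G),
          v⁻¹ * x * v ∈ MonoidHom.range (of : G j →* Monoid.CoprodI G) := by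
        intro x hx
        have hx' : of w'.last⁻¹ * x * (of w'.last⁻¹)⁻¹ ∈
            MonoidHom.range (of : G j →* Monoid.CoprodI G) :=
          mul_mem (mul_mem hofh hx) (inv_mem hofh)
        have := h1 _ hx'
        rw [hv]; convert this using 1; group
      have hvmem := ih v (by omega) hv1 hv2
      have : u⁻¹ ∈ MonoidHom.range (of : G j →* Monoid.CoprodI G) := by
        rw [huv]; exact mul_mem hofh hvmem
      exact (inv_mem_iff).mp this
    · exfalso
      obtain ⟨g, hg⟩ := hne
      obtain ⟨m, hm⟩ := h1 (of g) ⟨g, rfl⟩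
      have hmne : m ≠ 1 := by
        rintro rfl
        rw [map_one] at hm
        have : of g = (1 : Monoid.CoprodI G) := by
          have := hm.symm
          calc of g = u⁻¹ * (u * of g * u⁻¹) * u := by group
          _ = u⁻¹ * 1 * u := by rw [this]
          _ = 1 := by simp
        exact hg (Monoid.CoprodI.of_injective i₀ (by rw [this, map_one]))
      set W : NeWord G i i :=
        NeWord.append (NeWord.append w' hj (NeWord.singleton g hg)) (Ne.symm hj) w'.inv with hW
      have hWprod : W.prod = of m := by
        rw [hW]
        simp only [NeWord.append_prod, NeWord.prod_singleton, NeWord.inv_prod, hprod]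
        rw [← hm]
      have htoW : W.toWord = (NeWord.singleton m hmne).toWord := by
        apply word_prod_injective
        show W.prod = (NeWord.singleton m hmne).prod
        rw [hWprod, NeWord.prod_singleton]
      have hhead := congrArg (fun w : Word G => w.toList.head?) htoW
      simp only [NeWord.toWord] at hhead
      rw [W.toList_head?, (NeWord.singleton m hmne).toList_head?] at hhead
      have : i = i₀ := congrArg Sigma.fst (Option.some_injective _ hhead)
      exact hi this

end FreeProductLemmas

section PartB

open Monoid Subgroup

variable {G : Type*} [Group G]

theorem conjSubgroup_one' (N : Subgroup G) : conjSubgroup 1 N = N := by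
  ext x
  simp [conjSubgroup, Subgroup.mem_map]

theorem conjSubgroup_mul' (a b : G) (N : Subgroup G) :
    conjSubgroup (a * b) N = conjSubgroup a (conjSubgroup b N) := by
  have : (MulAut.conj (a * b)).toMonoidHom =
      ((MulAut.conj a).toMonoidHom).comp (MulAut.conj b).toMonoidHom := by
    ext x; simp [mul_assoc]
  rw [conjSubgroup, this, ← Subgroup.map_map]
  rfl

theorem cohenLyndon_injective' (H : Subgroup G) (N : Subgroup H)
    [N.Normal] (hCL : CohenLyndon H N) :
    Function.Injective
      (QuotientGroup.map N (Subgroup.normalClosure ((N.map H.subtype : Subgroup G) : Set G))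
        H.subtype
        (fun x hx => Subgroup.subset_normalClosure ⟨x, hx, rfl⟩)) := by
  classical
  set N' : Subgroup G := N.map H.subtype with hN'def
  set M : Subgroup G := Subgroup.normalClosure (N' : Set G) with hMdef
  obtain ⟨T, hT, hinj, hrange⟩ := hCL
  -- conjugation by elements of H preserves N'
  have hconj_le : ∀ g ∈ H, conjSubgroup g N' ≤ N' := by
    intro g hg x hx
    obtain ⟨n, hn, rfl⟩ := hx
    obtain ⟨ν, hν, rfl⟩ := hn
    refine ⟨(⟨g, hg⟩ : H) * ν * (⟨g, hg⟩ : H)⁻¹, Subgroup.Normal.conj_mem ‹N.Normal› ν hν _, ?_⟩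
    rfl
  have hconj_eq : ∀ g ∈ H, conjSubgroup g N' = N' := by
    intro g hg
    refine le_antisymm (hconj_le g hg) ?_
    intro x hx
    refine ⟨g⁻¹ * x * (g⁻¹)⁻¹, hconj_le g⁻¹ (inv_mem hg) ⟨x, hx, rfl⟩, ?_⟩
    show g * (g⁻¹ * x * (g⁻¹)⁻¹) * g⁻¹ = x
    group
  -- the key claim
  have key : ∀ h : H, (h : G) ∈ M → h ∈ N := by
    by_cases hbot : N' = ⊥
    · intro h hh
      have hMbot : M ≤ ⊥ := Subgroup.normalClosure_le_normal (by rw [hbot])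
      have : (h : G) = 1 := hMbot hh
      have : h = (1 : H) := Subtype.coe_injective this
      rw [this]; exact one_mem N
    -- nontrivial case
    obtain ⟨g₁, hg₁N', hg₁⟩ : ∃ g ∈ N', g ≠ 1 := by
      rw [Subgroup.eq_bot_iff_forall] at hbot
      push_neg at hbot
      exact hbot
    -- find t₀
    obtain ⟨⟨⟨t₀, ht₀T⟩, ⟨k₀, hk₀⟩⟩, ht₀k₀⟩ := (hT.existsUnique 1).exists
    have ht₀HM : t₀ ∈ H ⊔ M := by
      have : t₀ = k₀⁻¹ := by
        have := ht₀k₀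
        simp only at this
        rw [eq_inv_iff_mul_eq_one]
        exact this
      rw [this]
      exact inv_mem hk₀
    rw [← SetLike.mem_coe, Subgroup.mul_normal] at ht₀HM
    obtain ⟨h₀, hh₀, m₀, hm₀, hhm⟩ := ht₀HM
    set m₀' : G := h₀ * m₀ * h₀⁻¹ with hm₀'def
    have hm₀' : m₀' ∈ M := Subgroup.Normal.conj_mem inferInstance m₀ hm₀ h₀
    have ht₀ : t₀ = m₀' * h₀ := by rw [← hhm]; show h₀ * m₀ = m₀' * h₀; rw [hm₀'def]; group
    set F₀ : Subgroup G := conjSubgroup t₀ N' with hF₀def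
    have hF₀ : F₀ = conjSubgroup m₀' N' := by
      rw [hF₀def, ht₀, conjSubgroup_mul', hconj_eq h₀ hh₀]
    intro h hhM
    set u : G := m₀' * (h : G) * m₀'⁻¹ with hudef
    have hu : u ∈ M := Subgroup.Normal.conj_mem inferInstance (h : G) hhM m₀'
    have huF : conjSubgroup u F₀ = F₀ := by
      rw [hF₀, ← conjSubgroup_mul']
      have : u * m₀' = m₀' * (h : G) := by rw [hudef]; group
      rw [this, conjSubgroup_mul', hconj_eq (h : G) h.2, ← hF₀]
    have huF' : conjSubgroup u⁻¹ F₀ = F₀ := by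
      conv_lhs => rw [← huF, ← conjSubgroup_mul']
      simp [conjSubgroup_one']
    -- transfer to the free product
    set Φ : Monoid.CoprodI (fun t : T => conjSubgroup (t : G) N') →* G :=
      Monoid.CoprodI.lift fun t : T => (conjSubgroup (t : G) N').subtype with hΦdef
    set i₀ : T := ⟨t₀, ht₀T⟩ with hi₀def
    have hiff : ∀ x, x ∈ MonoidHom.range
        (Monoid.CoprodI.of (M := fun t : T => ↥(conjSubgroup (t : G) N')) (i := i₀)) ↔ Φ x ∈ F₀ := by
      intro x
      constructor
      · rintro ⟨y, rfl⟩
        rw [hΦdef, Monoid.CoprodI.lift_of]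
        exact y.2
      · intro hx
        exact ⟨⟨Φ x, hx⟩, hinj (by rw [Monoid.CoprodI.lift_of]; rfl)⟩
    obtain ⟨uh, huh⟩ : ∃ uh, Φ uh = u := by
      have : u ∈ Φ.range := by rw [hrange]; exact hu
      exact this
    have hnontriv : ∃ g : ↥(conjSubgroup ((i₀ : G)) N'), g ≠ 1 := by
      refine ⟨⟨t₀ * g₁ * t₀⁻¹, ⟨g₁, hg₁N', rfl⟩⟩, ?_⟩
      intro hc
      apply hg₁
      have hc' : t₀ * g₁ * t₀⁻¹ = 1 := congrArg Subtype.val hc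
      have := congrArg (fun z => t₀⁻¹ * z * t₀) hc'
      simpa [mul_assoc] using this
    have hc1 : ∀ x ∈ MonoidHom.range
        (Monoid.CoprodI.of (M := fun t : T => ↥(conjSubgroup (t : G) N')) (i := i₀)),
        uh * x * uh⁻¹ ∈ MonoidHom.range
          (Monoid.CoprodI.of (M := fun t : T => ↥(conjSubgroup (t : G) N')) (i := i₀)) := by
      intro x hx
      apply (hiff _).mpr
      rw [map_mul, map_mul, map_inv, huh, ← huF]
      exact ⟨Φ x, (hiff x).mp hx, rfl⟩
    have hc2 : ∀ x ∈ MonoidHom.range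
        (Monoid.CoprodI.of (M := fun t : T => ↥(conjSubgroup (t : G) N')) (i := i₀)),
        uh⁻¹ * x * uh ∈ MonoidHom.range
          (Monoid.CoprodI.of (M := fun t : T => ↥(conjSubgroup (t : G) N')) (i := i₀)) := by
      intro x hx
      apply (hiff _).mpr
      rw [map_mul, map_mul, map_inv, huh, ← huF']
      exact ⟨Φ x, (hiff x).mp hx, by show u⁻¹ * Φ x * (u⁻¹)⁻¹ = u⁻¹ * Φ x * u; group⟩
    obtain ⟨y, hy⟩ :=
      mem_range_of_conj i₀ hnontriv ((Monoid.CoprodI.Word.equiv uh).toList.length) uh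
        le_rfl hc1 hc2
    have huF₀ : u ∈ F₀ := by
      rw [← huh, ← hy, hΦdef, Monoid.CoprodI.lift_of]
      exact y.2
    have hhN' : (h : G) ∈ N' := by
      have hN'eq : N' = conjSubgroup m₀'⁻¹ F₀ := by
        rw [hF₀, ← conjSubgroup_mul']
        simp [conjSubgroup_one']
      rw [hN'eq]
      refine ⟨u, huF₀, ?_⟩
      show m₀'⁻¹ * u * (m₀'⁻¹)⁻¹ = (h : G)
      rw [hudef]
      group
    obtain ⟨ν, hν, hνh⟩ := hhN'
    have : ν = h := Subtype.coe_injective hνh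
    rw [← this]
    exact hν
  -- conclude injectivity
  rw [← MonoidHom.ker_eq_bot_iff]
  rw [eq_bot_iff]
  intro x hx
  induction x using QuotientGroup.induction_on with
  | H h =>
    rw [MonoidHom.mem_ker] at hx
    change ((H.subtype h : G) : G ⧸ Subgroup.normalClosure ((N.map H.subtype : Subgroup G) : Set G)) = 1 at hx
    rw [QuotientGroup.eq_one_iff] at hx
    simp only [Subgroup.mem_bot]
    rw [QuotientGroup.eq_one_iff]
    exact key h hx

end PartB


/-- If `(G, H, N)` is a Cohen–Lyndon triple (with `N ⊴ H ≤ G`), then the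
natural map `H/N → G/⟪N⟫` is injective. -/
theorem cohenLyndon_injective {G : Type*} [Group G] (H : Subgroup G) (N : Subgroup H)
    [N.Normal] (hCL : CohenLyndon H N) :
    Function.Injective
      (QuotientGroup.map N (Subgroup.normalClosure ((N.map H.subtype : Subgroup G) : Set G))
        H.subtype
        (fun x hx => Subgroup.subset_normalClosure ⟨x, hx, rfl⟩)) :=
  cohenLyndon_injective' H N hCL
end
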